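/- For positive reals $\delta_1,\dots,\delta_n$, the Cauchy matrix identity holds: $\det\left(\frac{1}{\delta_i+\delta_j}\right)_{1\le i,j\le n} = \frac{1}{2^n \prod_{i=1}^n \delta_i} \prod_{1\le i<j\le n} \left(\frac{\delta_j-\delta_i}{\delta_j+\delta_i}\right)^2$. -/

import Mathlib

open Finset

lemma prod_Ioi_castSucc' {M : Type*} [CommMonoid M] {n : ℕ} (i : Fin n) (f : Fin (n+1) → M) :
    ∏ j ∈ Finset.Ioi i.castSucc, f j
      = (∏ j ∈ Finset.Ioi i, f j.castSucc) * f (Fin.last n) := by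
  have hset : Finset.Ioi i.castSucc
      = insert (Fin.last n) ((Finset.Ioi i).map Fin.castSuccEmb) := by
    ext j
    simp only [Finset.mem_Ioi, Finset.mem_insert, Finset.mem_map, Fin.castSuccEmb_apply]
    constructor
    · intro hj
      refine Fin.lastCases ?_ (fun j' hj' => ?_) j hj
      · exact fun _ => Or.inl rfl
      · exact Or.inr ⟨j', by simpa [Fin.castSucc_lt_castSucc_iff] using hj', rfl⟩
    · rintro (rfl | ⟨k, hk, rfl⟩)
      · exact Fin.castSucc_lt_last i
      · exact Fin.castSucc_lt_castSucc_iff.mpr hk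
  rw [hset, Finset.prod_insert, Finset.prod_map, mul_comm]
  · rfl
  · simp only [Finset.mem_map, Fin.castSuccEmb_apply]
    rintro ⟨k, -, hk⟩
    exact (Fin.castSucc_lt_last k).ne hk

lemma prod_split {M : Type*} [CommMonoid M] :
    ∀ (n : ℕ) (g : Fin n → Fin n → M),
    ∏ i, ∏ j, g i j = (∏ i, g i i) * ∏ i, ∏ j ∈ Finset.Ioi i, (g i j * g j i) := by
  intro n
  induction n with
  | zero => intro g; simp
  | succ n ih =>
    intro g
    rw [Fin.prod_univ_castSucc (f := fun i => ∏ j, g i j)]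
    rw [Fin.prod_univ_castSucc (f := fun i => g i i)]
    rw [Fin.prod_univ_castSucc (f := fun i => ∏ j ∈ Finset.Ioi i, (g i j * g j i))]
    simp only [Fin.prod_univ_castSucc (f := fun j => g _ j)]
    rw [Finset.prod_mul_distrib]
    rw [ih (fun i j => g i.castSucc j.castSucc)]
    rw [Finset.prod_congr rfl (fun i _ => prod_Ioi_castSucc' i (fun j => g i.castSucc j * g j i.castSucc))]
    rw [Finset.prod_mul_distrib]
    have : Finset.Ioi (Fin.last n) = (∅ : Finset (Fin (n+1))) := by
      ext j; simp [Fin.lt_iff_val_lt_val, Nat.lt_irrefl, Fin.le_last, not_lt_of_ge,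
        (Fin.le_last j)]
    rw [this]
    simp only [Finset.prod_empty]
    rw [Finset.prod_mul_distrib, mul_one]
    ac_rfl

theorem cauchy_aux :
    ∀ (n : ℕ) (x y : Fin n → ℝ), (∀ i j, x i + y j ≠ 0) →
    Matrix.det (Matrix.of fun i j => (x i + y j)⁻¹) =
      (∏ i, ∏ j ∈ Finset.Ioi i, ((x j - x i) * (y j - y i))) / ∏ i, ∏ j, (x i + y j) := by
  intro n
  induction n with
  | zero => intro x y _; simp
  | succ n ih =>
    intro x y h
    set N := Fin.last n with hN
    set r : Fin (n+1) → ℝ := fun i => if i = N then 1 else x N - x i with hr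
    set s : Fin (n+1) → ℝ := fun j => (x N + y j)⁻¹ with hs
    set u : Fin (n+1) → ℝ := fun i => if i = N then 1 else (x i + y N)⁻¹ with hu
    set v : Fin (n+1) → ℝ := fun j => if j = N then 1 else y N - y j with hv
    set M2 : Matrix (Fin (n+1)) (Fin (n+1)) ℝ :=
      Matrix.of fun i j => if i = N then 1 else (x i + y j)⁻¹ with hM2
    set M4 : Matrix (Fin (n+1)) (Fin (n+1)) ℝ :=
      Matrix.of fun i j => if i = N then (if j = N then 1 else 0)
        else (if j = N then 1 else (x i + y j)⁻¹) with hM4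
    -- Step 1: row operations
    have h1 : Matrix.det (Matrix.of fun i j => (x i + y j)⁻¹)
        = Matrix.det (Matrix.of fun i j => r i * (s j * M2 i j)) := by
      apply Matrix.det_eq_of_forall_row_eq_smul_add_const
        (c := fun i => if i = N then 0 else 1) (k := N) (by simp)
      intro i j
      simp only [Matrix.of_apply, hr, hs, hM2]
      by_cases hi : i = N
      · simp [hi]
      · simp only [hi, if_neg hi, if_pos rfl, ite_false, ite_true]
        have h1 := h i j
        have h2 := h N j
        field_simp
        ring
    -- Step 2: factor rows and columns
    have h2 : Matrix.det (Matrix.of fun i j => r i * (s j * M2 i j))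
        = (∏ i, r i) * ((∏ j, s j) * Matrix.det M2) := by
      rw [show (Matrix.of fun i j => r i * (s j * M2 i j))
          = Matrix.of fun i j => r i * (Matrix.of fun i j => s j * M2 i j) i j from rfl]
      rw [Matrix.det_mul_column, Matrix.det_mul_row]
    -- Step 3: column operations
    have h3 : Matrix.det M2 = Matrix.det (Matrix.of fun i j => u i * (v j * M4 i j)) := by
      rw [← Matrix.det_transpose M2,
        ← Matrix.det_transpose (Matrix.of fun i j => u i * (v j * M4 i j))]
      apply Matrix.det_eq_of_forall_row_eq_smul_add_const
        (c := fun j => if j = N then 0 else 1) (k := N) (by simp)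
      intro j i
      simp only [Matrix.transpose_apply, Matrix.of_apply, hu, hv, hM2, hM4]
      by_cases hi : i = N <;> by_cases hj : j = N
      · simp [hi, hj]
      · simp [hi, hj]
      · simp [hi, hj]
      · simp only [hi, hj, ite_false, ite_true, if_neg hi, if_neg hj]
        have h1 := h i j
        have h2 := h i N
        field_simp
        ring
    have h4 : Matrix.det (Matrix.of fun i j => u i * (v j * M4 i j))
        = (∏ i, u i) * ((∏ j, v j) * Matrix.det M4) := by
      rw [show (Matrix.of fun i j => u i * (v j * M4 i j))
          = Matrix.of fun i j => u i * (Matrix.of fun i j => v j * M4 i j) i j from rfl]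
      rw [Matrix.det_mul_column, Matrix.det_mul_row]
    -- Step 4: expand along last row
    have h5 : Matrix.det M4
        = Matrix.det (Matrix.of fun (i j : Fin n) =>
            (x i.castSucc + y j.castSucc)⁻¹) := by
      rw [Matrix.det_succ_row M4 N]
      rw [Finset.sum_eq_single N]
      · have hMNN : M4 N N = 1 := by simp [hM4]
        have hsign : ((-1 : ℝ)) ^ ((N : ℕ) + (N : ℕ)) = 1 :=
          Even.neg_one_pow ⟨(N : ℕ), rfl⟩
        rw [hMNN, mul_one, hsign, one_mul]
        congr 1
        ext i j
        have hi : (Fin.last n).succAbove i = i.castSucc := Fin.succAbove_last_apply i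
        have hj : (Fin.last n).succAbove j = j.castSucc := Fin.succAbove_last_apply j
        simp only [Matrix.submatrix_apply, hi, hj, hM4, Matrix.of_apply, hN,
          (Fin.castSucc_lt_last i).ne, (Fin.castSucc_lt_last j).ne, ite_false, if_neg]
      · intro j _ hj
        have : M4 N j = 0 := by simp [hM4, hj]
        simp [this]
      · simp
    -- final combination
    rw [h1, h2, h3, h4, h5,
      ih (fun i => x i.castSucc) (fun j => y j.castSucc) (fun i j => h _ _)]
    have hIoiLast : Finset.Ioi (Fin.last n) = (∅ : Finset (Fin (n+1))) := by
      ext j; simp [Fin.lt_iff_val_lt_val, Nat.lt_irrefl, (Fin.le_last j), not_lt_of_ge]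
    have hr1 : ∏ i, r i = ∏ i : Fin n, (x N - x i.castSucc) := by
      rw [Fin.prod_univ_castSucc]
      simp [hr, fun i : Fin n => (Fin.castSucc_lt_last i).ne, hN]
    have hs1 : ∏ j, s j = (∏ j, (x N + y j))⁻¹ := by
      rw [← Finset.prod_inv_distrib]
    have hu1 : ∏ i, u i = (∏ i : Fin n, (x i.castSucc + y N))⁻¹ := by
      rw [Fin.prod_univ_castSucc]
      simp only [hu, hN, fun i : Fin n => (Fin.castSucc_lt_last i).ne, ite_false, ite_true,
        if_pos rfl, if_neg]
      rw [mul_one, ← Finset.prod_inv_distrib]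
    have hv1 : ∏ j, v j = ∏ j : Fin n, (y N - y j.castSucc) := by
      rw [Fin.prod_univ_castSucc]
      simp [hv, fun i : Fin n => (Fin.castSucc_lt_last i).ne, hN]
    have hP : (∏ i : Fin (n+1), ∏ j ∈ Finset.Ioi i, ((x j - x i) * (y j - y i)))
        = (∏ i : Fin n, ∏ j ∈ Finset.Ioi i,
            ((x j.castSucc - x i.castSucc) * (y j.castSucc - y i.castSucc)))
          * ((∏ i : Fin n, (x N - x i.castSucc)) * ∏ i : Fin n, (y N - y i.castSucc)) := by
      rw [Fin.prod_univ_castSucc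
        (f := fun i => ∏ j ∈ Finset.Ioi i, ((x j - x i) * (y j - y i)))]
      rw [hIoiLast, Finset.prod_empty, mul_one]
      rw [Finset.prod_congr rfl (fun i _ => prod_Ioi_castSucc' i
        (fun j => (x j - x i.castSucc) * (y j - y i.castSucc)))]
      rw [Finset.prod_mul_distrib, Finset.prod_mul_distrib, ← hN]
    have hQ : (∏ i : Fin (n+1), ∏ j : Fin (n+1), (x i + y j))
        = (∏ i : Fin n, ∏ j : Fin n, (x i.castSucc + y j.castSucc))
          * ((∏ i : Fin n, (x i.castSucc + y N)) * ∏ j, (x N + y j)) := by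
      rw [Fin.prod_univ_castSucc (f := fun i => ∏ j, (x i + y j))]
      rw [Finset.prod_congr rfl (fun i _ => Fin.prod_univ_castSucc
        (f := fun j => x i.castSucc + y j))]
      rw [Finset.prod_mul_distrib, ← hN]
      ring
    rw [hr1, hs1, hu1, hv1, hP, hQ]
    have hA : (∏ j, (x N + y j)) ≠ 0 := Finset.prod_ne_zero_iff.mpr fun j _ => h N j
    have hB : (∏ i : Fin n, (x i.castSucc + y N)) ≠ 0 :=
      Finset.prod_ne_zero_iff.mpr fun i _ => h _ N
    have hQ' : (∏ i : Fin n, ∏ j : Fin n, (x i.castSucc + y j.castSucc)) ≠ 0 :=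
      Finset.prod_ne_zero_iff.mpr fun i _ =>
        Finset.prod_ne_zero_iff.mpr fun j _ => h _ _
    field_simp

/-- Cauchy determinant identity for the matrix `1/(δ i + δ j)`. -/
theorem cauchy_det_identity (n : ℕ) (δ : Fin n → ℝ) (hδ : ∀ i, 0 < δ i) :
    Matrix.det (Matrix.of fun i j => 1 / (δ i + δ j)) =
      (1 / (2 ^ n * ∏ i, δ i)) *
      ∏ i, ∏ j ∈ Finset.univ.filter (fun j => i < j),
        ((δ j - δ i) / (δ j + δ i)) ^ 2 := by
  have h : ∀ i j : Fin n, δ i + δ j ≠ 0 := fun i j => (add_pos (hδ i) (hδ j)).ne'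
  have hf : ∀ i : Fin n, Finset.univ.filter (fun j => i < j) = Finset.Ioi i := by
    intro i; ext j; simp
  simp only [hf, one_div]
  rw [cauchy_aux n δ δ h, prod_split n (fun i j => δ i + δ j)]
  have hdiag : ∏ i, (δ i + δ i) = 2 ^ n * ∏ i, δ i := by
    have : ∀ i : Fin n, δ i + δ i = 2 * δ i := fun i => by ring
    rw [Finset.prod_congr rfl (fun i _ => this i), Finset.prod_mul_distrib,
      Finset.prod_const, Finset.card_univ, Fintype.card_fin]
  rw [hdiag]
  have e1 : (∏ i, ∏ j ∈ Finset.Ioi i, ((δ j - δ i) * (δ j - δ i)))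
      = ∏ i, ∏ j ∈ Finset.Ioi i, (δ j - δ i) ^ 2 :=
    Finset.prod_congr rfl fun i _ => Finset.prod_congr rfl fun j _ => (sq _).symm
  have e2 : (∏ i, ∏ j ∈ Finset.Ioi i, ((δ i + δ j) * (δ j + δ i)))
      = ∏ i, ∏ j ∈ Finset.Ioi i, (δ j + δ i) ^ 2 :=
    Finset.prod_congr rfl fun i _ => Finset.prod_congr rfl fun j _ => by ring
  rw [e1, e2]
  have e3 : (∏ i, ∏ j ∈ Finset.Ioi i, ((δ j - δ i) / (δ j + δ i)) ^ 2)
      = (∏ i, ∏ j ∈ Finset.Ioi i, (δ j - δ i) ^ 2)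
        / ∏ i, ∏ j ∈ Finset.Ioi i, (δ j + δ i) ^ 2 := by
    rw [← Finset.prod_div_distrib]
    exact Finset.prod_congr rfl fun i _ => by
      rw [← Finset.prod_div_distrib]
      exact Finset.prod_congr rfl fun j _ => div_pow _ _ _
  rw [e3]
  have hD : (2 : ℝ) ^ n * ∏ i, δ i ≠ 0 :=
    mul_ne_zero (pow_ne_zero _ two_ne_zero) (Finset.prod_pos (fun i _ => hδ i)).ne'
  have hB : (∏ i, ∏ j ∈ Finset.Ioi i, (δ j + δ i) ^ 2) ≠ 0 :=
    Finset.prod_ne_zero_iff.mpr fun i _ =>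
      Finset.prod_ne_zero_iff.mpr fun j _ => pow_ne_zero _ (h j i)
  field_simp
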